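/- For all integers m, p, n with 3 ≤ m ≤ p ≤ n − 1, one has P_m(p,n) ≤ R_m(p,n) + P_{p,n} ≤ C(p,m)·R_m(m,n) + P_{p,n}. -/

import Mathlib

open scoped Classical

noncomputable section

/-- The `{±1}`-vector in `ℝ^n` encoded by a Boolean vector. -/
def signVec {n : ℕ} (u : Fin n → Bool) : Fin n → ℝ := fun i => if u i then 1 else -1

/-- `v` is a `{±1}`-vector: all coordinates lie in `{-1, 1}`. -/
def IsPM {n : ℕ} (v : Fin n → ℝ) : Prop := ∀ i, v i = 1 ∨ v i = -1

/-- The real span of the `{±1}`-vectors encoded by `W` contains a `{±1}`-vector different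
from `±(W j)` for all `j`. -/
def KSOEvent {p n : ℕ} (W : Fin p → Fin n → Bool) : Prop :=
  ∃ x : Fin n → ℝ,
    x ∈ Submodule.span ℝ (Set.range fun j => signVec (W j)) ∧ IsPM x ∧
    ∀ j, x ≠ signVec (W j) ∧ x ≠ -signVec (W j)

/-- `ℙ(p, n)`: the probability that the real span of `p` uniformly random `{±1}`-vectors
in `ℝ^n` contains a `{±1}`-vector different from `±v_1, …, ±v_p`. -/
def probKSO (p n : ℕ) : ℝ :=
  ((Finset.univ.filter fun W : Fin p → Fin n → Bool => KSOEvent W).card : ℝ) / 2 ^ (p * n)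

/-- Some three of the vectors encoded by `W` have a real linear combination that is a
`{±1}`-vector different from `±` those three vectors. -/
def P3Event {p n : ℕ} (W : Fin p → Fin n → Bool) : Prop :=
  ∃ j₁ j₂ j₃ : Fin p, j₁ ≠ j₂ ∧ j₁ ≠ j₃ ∧ j₂ ≠ j₃ ∧
    ∃ a b c : ℝ, ∃ x : Fin n → ℝ,
      x = a • signVec (W j₁) + b • signVec (W j₂) + c • signVec (W j₃) ∧ IsPM x ∧
      (x ≠ signVec (W j₁) ∧ x ≠ -signVec (W j₁)) ∧
      (x ≠ signVec (W j₂) ∧ x ≠ -signVec (W j₂)) ∧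
      (x ≠ signVec (W j₃) ∧ x ≠ -signVec (W j₃))

/-- `ℙ₃(p, n)`: the probability of `P3Event` for `p` uniformly random `{±1}`-vectors in `ℝ^n`. -/
def probP3 (p n : ℕ) : ℝ :=
  ((Finset.univ.filter fun W : Fin p → Fin n → Bool => P3Event W).card : ℝ) / 2 ^ (p * n)

/-- Some `m` of the vectors encoded by `W` have a linear combination with all coefficients
nonzero that is a `{±1}`-vector. -/
def PmEvent (m : ℕ) {p n : ℕ} (W : Fin p → Fin n → Bool) : Prop :=
  ∃ j : Fin m → Fin p, Function.Injective j ∧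
    ∃ α : Fin m → ℝ, (∀ i, α i ≠ 0) ∧ IsPM (∑ i, α i • signVec (W (j i)))

/-- `ℙ_m(p, n)`: the probability of `PmEvent m` for `p` uniformly random `{±1}`-vectors
in `ℝ^n`. -/
def probPm (m p n : ℕ) : ℝ :=
  ((Finset.univ.filter fun W : Fin p → Fin n → Bool => PmEvent m W).card : ℝ) / 2 ^ (p * n)

/-- `𝓜_m(p, n)`: the set of `p × n` `{±1}`-matrices (encoded row-wise by Booleans) with
linearly independent rows, some `m` of which have a linear combination with nonzero
coefficients that is a `{±1}`-vector. -/
def MmSet (m p n : ℕ) : Finset (Fin p → Fin n → Bool) :=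
  Finset.univ.filter fun M =>
    (LinearIndependent ℝ fun i => signVec (M i)) ∧ PmEvent m M

/-- `R_m(p, n) = |𝓜_m(p, n)| / 2^(p n)`. -/
def Rm (m p n : ℕ) : ℝ := ((MmSet m p n).card : ℝ) / 2 ^ (p * n)

/-- `ℙ_{p,n}`: the probability that a uniformly random `p × n` `{±1}`-matrix has rank
less than `p`, i.e. its rows are linearly dependent over `ℝ`. -/
def probSingular (p n : ℕ) : ℝ :=
  ((Finset.univ.filter fun M : Fin p → Fin n → Bool =>
      ¬ LinearIndependent ℝ fun i => signVec (M i)).card : ℝ) / 2 ^ (p * n)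

/-- The vector `(1, b_1, …, b_n) ∈ E_n ⊂ ℝ^{n+1}` encoded by a Boolean vector. -/
def eVec {n : ℕ} (u : Fin n → Bool) : Fin (n + 1) → ℝ := Fin.cons 1 (signVec u)

/-- The number of ordered `n`-tuples of distinct, linearly independent vectors from `E_n`
whose real span contains a `{±1}`-vector of `ℝ^{n+1}` different from `±w_1, …, ±w_n`. -/
def KSOECard (n : ℕ) : ℕ :=
  (Finset.univ.filter fun W : Fin n → (Fin n → Bool) =>
    Function.Injective W ∧ (LinearIndependent ℝ fun i => eVec (W i)) ∧
    ∃ x : Fin (n + 1) → ℝ,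
      x ∈ Submodule.span ℝ (Set.range fun i => eVec (W i)) ∧ IsPM x ∧
      ∀ i, x ≠ eVec (W i) ∧ x ≠ -eVec (W i)).card

/-- `P(2, n)`: the number of threshold functions of `n` variables. -/
def numThreshold (n : ℕ) : ℕ :=
  (Finset.univ.filter fun f : (Fin n → Bool) → Bool =>
    ∃ a : ℝ, ∃ w : Fin n → ℝ,
      ∀ x, f x = true ↔ 0 < a + ∑ i, w i * signVec x i).card

lemma mmset_card_le (m p n : ℕ) (hmp : m ≤ p) :
    (MmSet m p n).card ≤ p.choose m * ((MmSet m m n).card * 2 ^ ((p - m) * n)) := by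
  classical
  set B : Finset (Fin p) → Finset (Fin p → Fin n → Bool) := fun S =>
    if hS : S.card = m then
      Finset.univ.filter fun W : Fin p → Fin n → Bool =>
        (fun k => W (S.orderEmbOfFin hS k)) ∈ MmSet m m n
    else ∅ with hB
  have hsub : MmSet m p n ⊆ ((Finset.univ : Finset (Fin p)).powersetCard m).biUnion B := by
    intro W hW
    rw [MmSet, Finset.mem_filter] at hW
    obtain ⟨-, hli, j, hj, α, hα, hPM⟩ := hW
    set S : Finset (Fin p) := Finset.univ.image j with hSdef
    have hS : S.card = m := by
      rw [hSdef, Finset.card_image_of_injective _ hj, Finset.card_univ, Fintype.card_fin]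
    refine Finset.mem_biUnion.mpr ⟨S, ?_, ?_⟩
    · simpa [Finset.mem_powersetCard_univ] using hS
    · rw [hB]
      simp only [dif_pos hS]
      set e := S.orderEmbOfFin hS with he
      have hτ : ∀ i, ∃ k, j k = e i := by
        intro i
        have : (e i : Fin p) ∈ S := Finset.orderEmbOfFin_mem S hS i
        rw [hSdef, Finset.mem_image] at this
        obtain ⟨k, -, hk⟩ := this
        exact ⟨k, hk⟩
      choose τ hτ using hτ
      have hτinj : Function.Injective τ := by
        intro a b hab
        have : e a = e b := by rw [← hτ a, ← hτ b, hab]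
        exact (S.orderEmbOfFin hS).injective this
      have hτbij : Function.Bijective τ := (Finite.injective_iff_bijective).mp hτinj
      set σ := Equiv.ofBijective τ hτbij with hσ
      refine Finset.mem_filter.mpr ⟨Finset.mem_univ _, Finset.mem_filter.mpr ⟨Finset.mem_univ _, ?_, ?_⟩⟩
      · exact hli.comp e (S.orderEmbOfFin hS).injective
      · refine ⟨id, Function.injective_id, fun i => α (τ i), fun i => hα _, ?_⟩
        have : (∑ i, α (τ i) • signVec (W (e (id i)))) = ∑ i, α i • signVec (W (j i)) := by
          have := Equiv.sum_comp σ (fun i => α i • signVec (W (j i)))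
          simp only [hσ, Equiv.ofBijective_apply] at this
          rw [← this]
          refine Finset.sum_congr rfl fun i _ => by rw [hτ i]; rfl
        rw [this]
        exact hPM
  have hbound : ∀ S ∈ (Finset.univ : Finset (Fin p)).powersetCard m,
      (B S).card ≤ (MmSet m m n).card * 2 ^ ((p - m) * n) := by
    intro S hSmem
    have hS : S.card = m := (Finset.mem_powersetCard_univ).mp hSmem
    rw [hB]
    simp only [dif_pos hS]
    set e := S.orderEmbOfFin hS with he
    have hcard2 : ((Finset.univ : Finset ((Sᶜ : Finset (Fin p)) → Fin n → Bool))).card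
        = 2 ^ ((p - m) * n) := by
      rw [Finset.card_univ, Fintype.card_fun]
      have h1 : Fintype.card (Fin n → Bool) = 2 ^ n := by
        rw [Fintype.card_fun, Fintype.card_bool, Fintype.card_fin]
      have h2 : Fintype.card (Sᶜ : Finset (Fin p)) = p - m := by
        rw [Fintype.card_coe, Finset.card_compl, Fintype.card_fin, hS]
      rw [h1, h2, ← pow_mul, Nat.mul_comm]
    calc (Finset.univ.filter fun W : Fin p → Fin n → Bool =>
            (fun k => W (e k)) ∈ MmSet m m n).card
        ≤ ((MmSet m m n) ×ˢ (Finset.univ : Finset ((Sᶜ : Finset (Fin p)) → Fin n → Bool))).card := by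
          apply Finset.card_le_card_of_injOn
            (fun W => ((fun k => W (e k)), fun i : (Sᶜ : Finset (Fin p)) => W i.1))
          · intro W hW
            rw [Finset.mem_coe, Finset.mem_filter] at hW
            exact Finset.mem_product.mpr ⟨hW.2, Finset.mem_univ _⟩
          · intro W hWmem W' hW'mem hWW'
            have h1 := congrArg Prod.fst hWW'
            have h2 := congrArg Prod.snd hWW'
            simp only at h1 h2
            funext i
            by_cases hi : i ∈ S
            · have : i ∈ Set.range e := by rw [he, Finset.range_orderEmbOfFin]; exact hi
              obtain ⟨k, hk⟩ := this
              have := congrFun h1 k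
              rw [hk] at this
              exact this
            · have := congrFun h2 ⟨i, Finset.mem_compl.mpr hi⟩
              exact this
      _ = (MmSet m m n).card * 2 ^ ((p - m) * n) := by
          rw [Finset.card_product, hcard2]
  calc (MmSet m p n).card
      ≤ (((Finset.univ : Finset (Fin p)).powersetCard m).biUnion B).card :=
        Finset.card_le_card hsub
    _ ≤ ∑ S ∈ (Finset.univ : Finset (Fin p)).powersetCard m, (B S).card :=
        Finset.card_biUnion_le
    _ ≤ ∑ _S ∈ (Finset.univ : Finset (Fin p)).powersetCard m,
          (MmSet m m n).card * 2 ^ ((p - m) * n) := Finset.sum_le_sum hbound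
    _ = p.choose m * ((MmSet m m n).card * 2 ^ ((p - m) * n)) := by
        rw [Finset.sum_const, Finset.card_powersetCard, Finset.card_univ, Fintype.card_fin,
          smul_eq_mul]

/-- for `3 ≤ m ≤ p ≤ n - 1`,
`ℙ_m(p,n) ≤ R_m(p,n) + ℙ_{p,n} ≤ C(p,m) R_m(m,n) + ℙ_{p,n}`. -/
theorem stmt13 (m p n : ℕ) (h1 : 3 ≤ m) (h2 : m ≤ p) (h3 : p + 1 ≤ n) :
    probPm m p n ≤ Rm m p n + probSingular p n ∧
    Rm m p n + probSingular p n ≤ (p.choose m : ℝ) * Rm m m n + probSingular p n := by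
  classical
  have hD : (0:ℝ) < 2 ^ (p * n) := by positivity
  constructor
  · have hsub : (Finset.univ.filter fun W : Fin p → Fin n → Bool => PmEvent m W)
        ⊆ MmSet m p n ∪ (Finset.univ.filter fun M : Fin p → Fin n → Bool =>
            ¬ LinearIndependent ℝ fun i => signVec (M i)) := by
      intro W hW
      rw [Finset.mem_filter] at hW
      by_cases hli : LinearIndependent ℝ fun i => signVec (W i)
      · exact Finset.mem_union_left _ (Finset.mem_filter.mpr ⟨Finset.mem_univ _, hli, hW.2⟩)
      · exact Finset.mem_union_right _ (Finset.mem_filter.mpr ⟨Finset.mem_univ _, hli⟩)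
    have hcard := (Finset.card_le_card hsub).trans (Finset.card_union_le _ _)
    rw [probPm, Rm, probSingular, ← add_div, div_le_div_iff₀ hD hD]
    have : ((Finset.univ.filter fun W : Fin p → Fin n → Bool => PmEvent m W).card : ℝ)
        ≤ ((MmSet m p n).card : ℝ) + ((Finset.univ.filter fun M : Fin p → Fin n → Bool =>
            ¬ LinearIndependent ℝ fun i => signVec (M i)).card : ℝ) := by
      exact_mod_cast hcard
    nlinarith [this, hD.le]
  · have hcard := mmset_card_le m p n h2
    have hcast : ((MmSet m p n).card : ℝ)
        ≤ (p.choose m : ℝ) * (((MmSet m m n).card : ℝ) * 2 ^ ((p - m) * n)) := by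
      exact_mod_cast hcard
    have hpow : (2:ℝ) ^ (p * n) = 2 ^ ((p - m) * n) * 2 ^ (m * n) := by
      rw [← pow_add]
      congr 1
      rw [← Nat.add_mul, Nat.sub_add_cancel h2]
    have hDm : (0:ℝ) < 2 ^ (m * n) := by positivity
    have hDpm : (0:ℝ) < 2 ^ ((p - m) * n) := by positivity
    refine add_le_add ?_ le_rfl
    rw [Rm, Rm, div_le_iff₀ hD, hpow]
    calc ((MmSet m p n).card : ℝ)
        ≤ (p.choose m : ℝ) * (((MmSet m m n).card : ℝ) * 2 ^ ((p - m) * n)) := hcast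
      _ = (p.choose m : ℝ) * (((MmSet m m n).card : ℝ) / 2 ^ (m * n))
            * (2 ^ ((p - m) * n) * 2 ^ (m * n)) := by
          field_simp
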